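/- Let (R,m) be a Noetherian local ring of characteristic p > 0, M a finitely generated R-module, and L ⊆ N ⊆ M submodules with N ⊆ (L + N^Fsp_M)^F_M. Then N ⊆ L^F_M. -/

import Mathlib

open TensorProduct

/-- `R` viewed as an `R`-algebra via the `e`-th iterate of the Frobenius endomorphism. -/
def FrobTwist (R : Type*) [CommRing R] (p : ℕ) [Fact p.Prime] [CharP R p] (_e : ℕ) :
    Type _ := R

instance (R : Type*) [CommRing R] (p : ℕ) [Fact p.Prime] [CharP R p] (e : ℕ) :
    CommRing (FrobTwist R p e) := ‹CommRing R›

noncomputable instance (R : Type*) [CommRing R] (p : ℕ) [Fact p.Prime] [CharP R p] (e : ℕ) :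
    Algebra R (FrobTwist R p e) := (iterateFrobenius R p e).toAlgebra

/-- The `e`-th Frobenius functor applied to the `R`-module `M`:
`F^e(M) = FrobTwist R p e ⊗[R] M`, a module over `FrobTwist R p e` (which is `R` as a ring). -/
def FrobModule (R : Type*) [CommRing R] (p : ℕ) [Fact p.Prime] [CharP R p]
    (M : Type*) [AddCommGroup M] [Module R M] (e : ℕ) : Type _ :=
  FrobTwist R p e ⊗[R] M

section
variable (R : Type*) [CommRing R] (p : ℕ) [Fact p.Prime] [CharP R p]
  (M : Type*) [AddCommGroup M] [Module R M] (e : ℕ)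

noncomputable instance : AddCommGroup (FrobModule R p M e) :=
  inferInstanceAs (AddCommGroup (FrobTwist R p e ⊗[R] M))

noncomputable instance : Module (FrobTwist R p e) (FrobModule R p M e) :=
  inferInstanceAs (Module (FrobTwist R p e) (FrobTwist R p e ⊗[R] M))

/-- The image `z^q := F^e(z)` of `z ∈ M` in `F^e(M)`. -/
noncomputable def frobMap (z : M) : FrobModule R p M e := (1 : FrobTwist R p e) ⊗ₜ[R] z

/-- The Frobenius power `N^{[q]}_M ⊆ F^e(M)` of a submodule `N ⊆ M`, `q = p^e`. -/
noncomputable def frobPow (N : Submodule R M) : Submodule (FrobTwist R p e) (FrobModule R p M e) :=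
  Submodule.span (FrobTwist R p e) (frobMap R p M e '' N)

/-- An ideal of `R`, regarded as an ideal of `FrobTwist R p e` (the same ring). -/
def idealTwist (I : Ideal R) : Ideal (FrobTwist R p e) := I

/-- The Frobenius closure `N^F_M` of a submodule `N ⊆ M`, as a set. -/
noncomputable def frobClSet (N : Submodule R M) : Set M :=
  {z | ∃ e : ℕ, frobMap R p M e z ∈ frobPow R p M e N}

/-- The special part of the Frobenius closure `N^{Fsp}_M`, as a set:
elements `z` with `z^q ∈ m·N^{[q]}_M` for some `q = p^e`. -/
noncomputable def frobSpSet [IsLocalRing R] (N : Submodule R M) : Set M :=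
  {z | ∃ e : ℕ, frobMap R p M e z ∈
    idealTwist R p e (IsLocalRing.maximalIdeal R) • frobPow R p M e N}

end

section Aux
variable (R : Type*) [CommRing R] (p : ℕ) [Fact p.Prime] [CharP R p]
  (M : Type*) [AddCommGroup M] [Module R M]

instance (e : ℕ) : CharP (FrobTwist R p e) p := ‹CharP R p›

/-- `iterateFrobenius` as a ring hom `R →+* FrobTwist R p e`. -/
noncomputable def frobHom (e : ℕ) : R →+* FrobTwist R p e := iterateFrobenius R p e

/-- `iterateFrobenius` as a ring hom `FrobTwist R p e →+* FrobTwist R p (e+e')`. -/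
noncomputable def frobStepHom (e e' : ℕ) : FrobTwist R p e →+* FrobTwist R p (e + e') :=
  iterateFrobenius R p e'

noncomputable def twistStep (e e' : ℕ) : FrobTwist R p e →ₗ[R] FrobTwist R p (e + e') where
  toFun x := x ^ p ^ e'
  map_add' x y := add_pow_char_pow x y p e'
  map_smul' r x := by
    show (r ^ p ^ e * @id R x) ^ p ^ e' = r ^ p ^ (e + e') * (@id R x) ^ p ^ e'
    rw [mul_pow, ← pow_mul, ← pow_add]

lemma twistStep_one (e e' : ℕ) : twistStep R p e e' 1 = 1 := one_pow _

noncomputable def frobMapSL (e : ℕ) :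
    M →ₛₗ[frobHom R p e] FrobModule R p M e where
  toFun := frobMap R p M e
  map_add' z w := TensorProduct.tmul_add _ z w
  map_smul' r z := by
    show (1 : FrobTwist R p e) ⊗ₜ[R] (r • z)
        = frobHom R p e r • ((1 : FrobTwist R p e) ⊗ₜ[R] z)
    rw [← TensorProduct.smul_tmul, TensorProduct.smul_tmul', Algebra.smul_def]
    rfl

noncomputable def frobStep (e e' : ℕ) :
    FrobModule R p M e →ₛₗ[frobStepHom R p e e'] FrobModule R p M (e + e') where
  toFun := LinearMap.rTensor M (twistStep R p e e')
  map_add' x y := map_add _ x y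
  map_smul' c x := by
    show LinearMap.rTensor M (twistStep R p e e') (c • (x : FrobTwist R p e ⊗[R] M))
        = frobStepHom R p e e' c • LinearMap.rTensor M (twistStep R p e e') x
    revert x
    change ∀ x : FrobTwist R p e ⊗[R] M, LinearMap.rTensor M (twistStep R p e e') (c • x)
        = frobStepHom R p e e' c • LinearMap.rTensor M (twistStep R p e e') x
    intro x
    induction x using TensorProduct.induction_on with
    | zero => simp
    | tmul a m =>
      rw [TensorProduct.smul_tmul', LinearMap.rTensor_tmul, LinearMap.rTensor_tmul,
        TensorProduct.smul_tmul']
      congr 1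
      show (@id R c * @id R a) ^ p ^ e' = (@id R c) ^ p ^ e' * (@id R a) ^ p ^ e'
      exact mul_pow _ _ _
    | add x y hx hy =>
      rw [smul_add, map_add, map_add, hx, hy, smul_add]

lemma frobStep_frobMap (e e' : ℕ) (z : M) :
    frobStep R p M e e' (frobMap R p M e z) = frobMap R p M (e + e') z := by
  have h : frobStep R p M e e' (frobMap R p M e z)
      = LinearMap.rTensor M (twistStep R p e e') ((1 : FrobTwist R p e) ⊗ₜ[R] z) := rfl
  rw [h, LinearMap.rTensor_tmul, twistStep_one]
  rfl

lemma frobPow_le_comap (K : Submodule R M) (e e' : ℕ) :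
    frobPow R p M e K ≤
      Submodule.comap (frobStep R p M e e') (frobPow R p M (e + e') K) := by
  rw [frobPow, Submodule.span_le]
  rintro _ ⟨n, hn, rfl⟩
  simp only [SetLike.mem_coe, Submodule.mem_comap, frobStep_frobMap]
  exact Submodule.subset_span ⟨n, hn, rfl⟩

lemma smul_frobPow_le_comap [IsLocalRing R] (K : Submodule R M) (e e' : ℕ) :
    idealTwist R p e (IsLocalRing.maximalIdeal R) • frobPow R p M e K ≤
      Submodule.comap (frobStep R p M e e')
        (idealTwist R p (e + e') (IsLocalRing.maximalIdeal R) • frobPow R p M (e + e') K) := by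
  apply Submodule.smul_le.2
  intro r hr x hx
  rw [Submodule.mem_comap, LinearMap.map_smulₛₗ]
  refine Submodule.smul_mem_smul ?_ (frobPow_le_comap R p M K e e' hx)
  show (r : R) ^ p ^ e' ∈ (IsLocalRing.maximalIdeal R : Ideal R)
  exact Ideal.pow_mem_of_mem _ hr _ (pow_pos (Fact.out : p.Prime).pos e')

lemma frobPow_sup_le (K K' : Submodule R M) (e : ℕ) :
    frobPow R p M e (K ⊔ K') ≤ frobPow R p M e K ⊔ frobPow R p M e K' := by
  rw [frobPow, Submodule.span_le]
  rintro _ ⟨w, hw, rfl⟩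
  obtain ⟨a, ha, b, hb, rfl⟩ := Submodule.mem_sup.mp hw
  have hadd : frobMap R p M e (a + b) = frobMap R p M e a + frobMap R p M e b :=
    TensorProduct.tmul_add _ _ _
  rw [SetLike.mem_coe, hadd]
  exact Submodule.add_mem_sup (Submodule.subset_span ⟨a, ha, rfl⟩)
    (Submodule.subset_span ⟨b, hb, rfl⟩)

lemma frobPow_le_of_forall (K : Submodule R M) (e : ℕ)
    (Q : Submodule (FrobTwist R p e) (FrobModule R p M e))
    (hK : ∀ z ∈ K, frobMap R p M e z ∈ Q) : frobPow R p M e K ≤ Q := by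
  rw [frobPow, Submodule.span_le]
  rintro _ ⟨n, hn, rfl⟩
  exact hK n hn

instance (e : ℕ) [IsNoetherianRing R] : IsNoetherianRing (FrobTwist R p e) :=
  inferInstanceAs (IsNoetherianRing R)

instance (e : ℕ) [IsLocalRing R] : IsLocalRing (FrobTwist R p e) :=
  inferInstanceAs (IsLocalRing R)

noncomputable instance (e : ℕ) [Module.Finite R M] :
    Module.Finite (FrobTwist R p e) (FrobModule R p M e) :=
  inferInstanceAs (Module.Finite (FrobTwist R p e) (FrobTwist R p e ⊗[R] M))

lemma idealTwist_maximalIdeal (e : ℕ) [IsLocalRing R] :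
    idealTwist R p e (IsLocalRing.maximalIdeal R)
      = IsLocalRing.maximalIdeal (FrobTwist R p e) := rfl

lemma frob_uniform [IsNoetherianRing R] [Module.Finite R M]
    (P : ∀ e : ℕ, Submodule (FrobTwist R p e) (FrobModule R p M e))
    (hP : ∀ e e', P e ≤ Submodule.comap (frobStep R p M e e') (P (e + e')))
    (T : Submodule R M) (hT : ∀ z ∈ T, ∃ e, frobMap R p M e z ∈ P e) :
    ∃ E, ∀ z ∈ T, frobMap R p M E z ∈ P E := by
  classical
  obtain ⟨s, hs⟩ := IsNoetherian.noetherian T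
  have hchoice : ∀ x : M, ∃ e, x ∈ T → frobMap R p M e x ∈ P e := by
    intro x
    by_cases hx : x ∈ T
    · obtain ⟨e, he⟩ := hT x hx
      exact ⟨e, fun _ => he⟩
    · exact ⟨0, fun hx' => absurd hx' hx⟩
  choose f hfP using hchoice
  refine ⟨s.sup f, fun z hz => ?_⟩
  have key : ∀ x ∈ (s : Set M), frobMap R p M (s.sup f) x ∈ P (s.sup f) := by
    intro x hx
    have hxT : x ∈ T := hs ▸ Submodule.subset_span hx
    have h1 : frobMap R p M (f x) x ∈ P (f x) := hfP x hxT
    have hle : f x ≤ s.sup f := Finset.le_sup (Finset.mem_coe.mp hx)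
    have h2 := hP (f x) (s.sup f - f x) h1
    rw [Submodule.mem_comap, frobStep_frobMap, Nat.add_sub_cancel' hle] at h2
    exact h2
  have hTle : T ≤ Submodule.comap (frobMapSL R p M (s.sup f)) (P (s.sup f)) := by
    rw [← hs, Submodule.span_le]
    intro x hx
    rw [SetLike.mem_coe, Submodule.mem_comap]
    exact key x hx
  exact hTle hz

end Aux

/-- (Nakayama property of `Fsp`.) Let `(R,m)` be Noetherian local of
characteristic `p > 0`, `M` finitely generated, and `L ⊆ N ⊆ M` submodules with
`N ⊆ (L + N^{Fsp}_M)^F_M`.  Then `N ⊆ L^F_M`. -/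
theorem frobSp_nakayama
    (R : Type*) [CommRing R] [IsNoetherianRing R] [IsLocalRing R]
    (p : ℕ) [Fact p.Prime] [CharP R p]
    (M : Type*) [AddCommGroup M] [Module R M] [Module.Finite R M]
    (L N : Submodule R M) (hLN : L ≤ N)
    (S : Submodule R M) (hS : (S : Set M) = frobSpSet R p M N)
    (h : (N : Set M) ⊆ frobClSet R p M (L ⊔ S)) :
    (N : Set M) ⊆ frobClSet R p M L := by
  -- uniform exponent for the special part condition on S
  obtain ⟨E₁, hE₁⟩ := frob_uniform R p M
    (fun e => idealTwist R p e (IsLocalRing.maximalIdeal R) • frobPow R p M e N)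
    (fun e e' => smul_frobPow_le_comap R p M N e e') S
    (fun z hz => by
      have : z ∈ frobSpSet R p M N := hS ▸ hz
      exact this)
  -- uniform exponent for the closure condition on N
  obtain ⟨E₂, hE₂⟩ := frob_uniform R p M (fun e => frobPow R p M e (L ⊔ S))
    (fun e e' => frobPow_le_comap R p M (L ⊔ S) e e') N (fun z hz => h hz)
  set E := max E₁ E₂ with hE
  -- lift both to the common exponent E
  have hS' : ∀ z ∈ S, frobMap R p M E z ∈
      idealTwist R p E (IsLocalRing.maximalIdeal R) • frobPow R p M E N := by
    intro z hz
    have h2 := smul_frobPow_le_comap R p M N E₁ (E - E₁) (hE₁ z hz)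
    rwa [Submodule.mem_comap, frobStep_frobMap,
      Nat.add_sub_cancel' (le_max_left E₁ E₂)] at h2
  have hN' : ∀ z ∈ N, frobMap R p M E z ∈ frobPow R p M E (L ⊔ S) := by
    intro z hz
    have h2 := frobPow_le_comap R p M (L ⊔ S) E₂ (E - E₂) (hE₂ z hz)
    rwa [Submodule.mem_comap, frobStep_frobMap,
      Nat.add_sub_cancel' (le_max_right E₁ E₂)] at h2
  -- the key inclusion  N^[q] ≤ L^[q] + m • N^[q]
  have hkey : frobPow R p M E N ≤ frobPow R p M E L ⊔
      idealTwist R p E (IsLocalRing.maximalIdeal R) • frobPow R p M E N := by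
    apply frobPow_le_of_forall
    intro z hz
    obtain ⟨a, ha, b, hb, hab⟩ := Submodule.mem_sup.mp
      (frobPow_sup_le R p M L S E (hN' z hz))
    have hb' : b ∈ idealTwist R p E (IsLocalRing.maximalIdeal R) • frobPow R p M E N :=
      frobPow_le_of_forall R p M S E _ hS' hb
    rw [← hab]
    exact Submodule.add_mem_sup ha hb'
  -- Nakayama
  have hBA : frobPow R p M E N ≤ frobPow R p M E L := by
    refine Submodule.le_of_le_smul_of_le_jacobson_bot
      (I := IsLocalRing.maximalIdeal (FrobTwist R p E)) (IsNoetherian.noetherian _) ?_ ?_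
    · exact (IsLocalRing.jacobson_eq_maximalIdeal (⊥ : Ideal (FrobTwist R p E)) bot_ne_top).ge
    · rw [idealTwist_maximalIdeal] at hkey
      exact hkey
  intro z hz
  exact ⟨E, hBA (Submodule.subset_span ⟨z, hz, rfl⟩)⟩
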